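/- For each natural number n there exists a nonzero real constant C, depending only on n, such that for every choice of real numbers x_0,…,x_n and y_0,…,y_n one has det M = C · ψ_n(x) · ψ_n(y), where ψ_n(x) = ∏_{i=1}^n ∏_{ℓ=0}^{i-1} (x_i − x_ℓ)^{n+1−i} and ψ_n(y) = ∏_{i=1}^n ∏_{ℓ=0}^{i-1} (y_i − y_ℓ)^{n+1−i}. -/
import Mathlib

open Finset

set_option maxHeartbeats 1000000

/-- Index set of a triangular lattice of degree `n` in two dimensions:
pairs `(i, j)` with `i + j ≤ n`. -/
abbrev TriIdx (n : ℕ) := {p : Fin (n + 1) × Fin (n + 1) // p.1.val + p.2.val ≤ n}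

/-- The sample matrix of the triangular lattice `{(x_i, y_j) : i + j ≤ n}`
with respect to the bivariate monomials of total degree at most `n`;
only the values `x_0, …, x_n` and `y_0, …, y_n` are used. -/
def sampleMatrix2 (n : ℕ) (x y : ℕ → ℝ) : Matrix (TriIdx n) (TriIdx n) ℝ :=
  Matrix.of fun r c => x (r.val.1 : ℕ) ^ (c.val.1 : ℕ) * y (r.val.2 : ℕ) ^ (c.val.2 : ℕ)

/-- `ψ_n(x) = ∏_{i=1}^n ∏_{ℓ=0}^{i-1} (x_i − x_ℓ)^{n+1−i}`. -/
def psi (n : ℕ) (x : ℕ → ℝ) : ℝ :=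
  ∏ i ∈ Finset.Icc 1 n, ∏ l ∈ Finset.range i, (x i - x l) ^ (n + 1 - i)

namespace TriAux

open Polynomial

variable {n : ℕ}

/-- Linearization key for the dominance order. -/
def key (n : ℕ) (p : TriIdx n) : ℕ := (p.1.1.1 + p.1.2.1) * (n + 2) + p.1.1.1

lemma key_lt_aux {s s' i i' m : ℕ} (hi : i < m) (hs : s < s') : s * m + i < s' * m + i' := by
  have h1 : s * m + i < (s + 1) * m := by rw [add_mul, one_mul]; omega
  have h2 : (s + 1) * m ≤ s' * m := Nat.mul_le_mul_right m hs
  omega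

lemma key_inj : Function.Injective (key n) := by
  rintro ⟨⟨i, j⟩, hij⟩ ⟨⟨i', j'⟩, hij'⟩ h
  have hij : i.1 + j.1 ≤ n := hij
  have hij' : i'.1 + j'.1 ≤ n := hij'
  have h : (i.1 + j.1) * (n + 2) + i.1 = (i'.1 + j'.1) * (n + 2) + i'.1 := h
  have hs : i.1 + j.1 = i'.1 + j'.1 := by
    rcases lt_trichotomy (i.1 + j.1) (i'.1 + j'.1) with hlt | heq | hgt
    · exact absurd h (Nat.ne_of_lt (key_lt_aux (by omega) hlt))
    · exact heq
    · exact absurd h.symm (Nat.ne_of_lt (key_lt_aux (by omega) hgt))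
  rw [hs] at h
  have h1 : i.1 = i'.1 := by omega
  have h3 : j.1 = j'.1 := by omega
  simp only [Subtype.mk.injEq, Prod.mk.injEq]
  exact ⟨Fin.ext h1, Fin.ext h3⟩

lemma key_le_of_dom {p q : TriIdx n} (h1 : q.1.1.1 ≤ p.1.1.1) (h2 : q.1.2.1 ≤ p.1.2.1) :
    key n q ≤ key n p := by
  rcases p with ⟨⟨i, j⟩, hij⟩; rcases q with ⟨⟨a, b⟩, hab⟩
  have hab : a.1 + b.1 ≤ n := hab
  show (a.1 + b.1) * (n + 2) + a.1 ≤ (i.1 + j.1) * (n + 2) + i.1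
  simp only at h1 h2
  rcases Nat.lt_or_ge (a.1 + b.1) (i.1 + j.1) with h | h
  · exact le_of_lt (key_lt_aux (by omega) h)
  · have heq : a.1 + b.1 = i.1 + j.1 := by omega
    rw [heq]
    omega

/-- Newton basis polynomial `N_a(X) = ∏_{l<a} (X - x_l)`. -/
noncomputable def Np (x : ℕ → ℝ) (a : ℕ) : ℝ[X] := ∏ l ∈ Finset.range a, (X - C (x l))

lemma Np_monic (x : ℕ → ℝ) (a : ℕ) : (Np x a).Monic :=
  monic_prod_of_monic _ _ fun i _ => monic_X_sub_C (x i)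

lemma Np_natDegree (x : ℕ → ℝ) (a : ℕ) : (Np x a).natDegree = a := by
  rw [Np, natDegree_prod_of_monic _ _ fun i _ => monic_X_sub_C (x i)]
  simp

lemma Np_coeff_self (x : ℕ → ℝ) (a : ℕ) : (Np x a).coeff a = 1 := by
  have := (Np_monic x a).coeff_natDegree
  rwa [Np_natDegree] at this

lemma Np_coeff_eq_zero (x : ℕ → ℝ) {a c : ℕ} (h : a < c) : (Np x a).coeff c = 0 :=
  coeff_eq_zero_of_natDegree_lt (by rwa [Np_natDegree])

lemma Np_eval (x : ℕ → ℝ) (a : ℕ) (t : ℝ) :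
    (Np x a).eval t = ∏ l ∈ Finset.range a, (t - x l) := by
  simp [Np, eval_prod]

lemma Np_eval_self_zero (x : ℕ → ℝ) {a i : ℕ} (h : i < a) : (Np x a).eval (x i) = 0 := by
  rw [Np_eval]
  exact Finset.prod_eq_zero (Finset.mem_range.2 h) (by simp)

/-- The Newton sample matrix. -/
noncomputable def Nmat (n : ℕ) (x y : ℕ → ℝ) : Matrix (TriIdx n) (TriIdx n) ℝ :=
  fun r c => (Np x c.1.1.1).eval (x r.1.1.1) * (Np y c.1.2.1).eval (y r.1.2.1)

/-- The (unitriangular) change of basis matrix from monomials to Newton polynomials. -/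
noncomputable def Smat (n : ℕ) (x y : ℕ → ℝ) : Matrix (TriIdx n) (TriIdx n) ℝ :=
  fun c a => (Np x a.1.1.1).coeff c.1.1.1 * (Np y a.1.2.1).coeff c.1.2.1

lemma mul_S (x y : ℕ → ℝ) : sampleMatrix2 n x y * Smat n x y = Nmat n x y := by
  ext r a
  rcases r with ⟨⟨i, j⟩, hij⟩
  rcases a with ⟨⟨a, b⟩, hab⟩
  simp only [Matrix.mul_apply, sampleMatrix2, Smat, Nmat, Matrix.of_apply]
  have hkey : ∑ c : TriIdx n, (x i.1 ^ c.1.1.1 * y j.1 ^ c.1.2.1) *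
      ((Np x a.1).coeff c.1.1.1 * (Np y b.1).coeff c.1.2.1)
      = ∑ c : Fin (n+1) × Fin (n+1), (x i.1 ^ c.1.1 * y j.1 ^ c.2.1) *
      ((Np x a.1).coeff c.1.1 * (Np y b.1).coeff c.2.1) := by
    have hab' : a.1 + b.1 ≤ n := hab
    calc ∑ c : TriIdx n, (x i.1 ^ c.1.1.1 * y j.1 ^ c.1.2.1) *
          ((Np x a.1).coeff c.1.1.1 * (Np y b.1).coeff c.1.2.1)
        = ∑ c ∈ Finset.univ.filter (fun c : Fin (n+1) × Fin (n+1) => c.1.1 + c.2.1 ≤ n),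
          (x i.1 ^ c.1.1 * y j.1 ^ c.2.1) * ((Np x a.1).coeff c.1.1 * (Np y b.1).coeff c.2.1) :=
          (Finset.sum_subtype (p := fun c : Fin (n+1) × Fin (n+1) => c.1.1 + c.2.1 ≤ n)
            (Finset.univ.filter fun c : Fin (n+1) × Fin (n+1) => c.1.1 + c.2.1 ≤ n)
            (fun q => by simp)
            (fun c : Fin (n+1) × Fin (n+1) => (x i.1 ^ c.1.1 * y j.1 ^ c.2.1) *
              ((Np x a.1).coeff c.1.1 * (Np y b.1).coeff c.2.1))).symm
      _ = ∑ c : Fin (n+1) × Fin (n+1), (x i.1 ^ c.1.1 * y j.1 ^ c.2.1) *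
          ((Np x a.1).coeff c.1.1 * (Np y b.1).coeff c.2.1) := by
          apply Finset.sum_filter_of_ne
          intro c _ hne
          by_contra hc
          push_neg at hc
          rcases Nat.lt_or_ge a.1 c.1.1 with h | h
          · rw [Np_coeff_eq_zero x h] at hne; simp at hne
          · have : b.1 < c.2.1 := by omega
            rw [Np_coeff_eq_zero y this] at hne; simp at hne
  rw [hkey, Fintype.sum_prod_type]
  have expand : ∀ (z : ℕ → ℝ) (e : Fin (n+1)) (t : ℝ),
      (Np z e.1).eval t = ∑ c : Fin (n+1), (Np z e.1).coeff c.1 * t ^ c.1 := by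
    intro z e t
    rw [Fin.sum_univ_eq_sum_range (fun c => (Np z e.1).coeff c * t ^ c)]
    exact eval_eq_sum_range' (by rw [Np_natDegree]; exact e.2) t
  rw [expand x a, expand y b, Finset.sum_mul]
  simp only [Finset.mul_sum]
  refine Finset.sum_congr rfl fun c _ => ?_
  refine Finset.sum_congr rfl fun d _ => ?_
  ring

lemma det_S (x y : ℕ → ℝ) : (Smat n x y).det = 1 := by
  letI : LinearOrder (TriIdx n) := LinearOrder.lift' (key n) key_inj
  have hdet : (Smat n x y).det = ∏ p : TriIdx n, Smat n x y p p := by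
    apply Matrix.det_of_upperTriangular
    intro p q (h : key n q < key n p)
    by_contra hne
    simp only [Smat] at hne
    have h1 : p.1.1.1 ≤ q.1.1.1 := by
      by_contra hgt
      push_neg at hgt
      rw [Np_coeff_eq_zero x hgt] at hne; simp at hne
    have h2 : p.1.2.1 ≤ q.1.2.1 := by
      by_contra hgt
      push_neg at hgt
      rw [Np_coeff_eq_zero y hgt] at hne; simp at hne
    exact absurd (key_le_of_dom h1 h2) (not_le.2 h)
  rw [hdet]
  apply Finset.prod_eq_one
  intro p _
  simp [Smat, Np_coeff_self]

lemma prod_fst (f : ℕ → ℝ) :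
    ∏ p : TriIdx n, f p.1.1.1 = ∏ i ∈ Finset.range (n + 1), f i ^ (n + 1 - i) := by
  rw [← Finset.prod_subtype (Finset.univ.filter fun q : Fin (n+1) × Fin (n+1) => q.1.1 + q.2.1 ≤ n)
      (fun q => by simp) (fun q : Fin (n+1) × Fin (n+1) => f q.1.1)]
  rw [Finset.prod_filter, Fintype.prod_prod_type]
  rw [← Fin.prod_univ_eq_prod_range (fun i => f i ^ (n + 1 - i))]
  refine Finset.prod_congr rfl fun i _ => ?_
  have hcard : (Finset.univ.filter fun j : Fin (n+1) => i.1 + j.1 ≤ n)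
      = Finset.Iic (⟨n - i.1, by omega⟩ : Fin (n+1)) := by
    ext j
    simp only [Finset.mem_filter, Finset.mem_univ, true_and, Finset.mem_Iic, Fin.le_def]
    have := i.2
    constructor <;> intro h <;> omega
  calc ∏ j : Fin (n+1), (if i.1 + j.1 ≤ n then f i.1 else 1)
      = ∏ j ∈ Finset.univ.filter fun j : Fin (n+1) => i.1 + j.1 ≤ n, f i.1 := by
        rw [Finset.prod_filter]
    _ = f i.1 ^ (n + 1 - i.1) := by
        rw [Finset.prod_const, hcard, Fin.card_Iic]
        congr 1
        simp only [Fin.val_mk]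
        have := i.2
        omega

lemma prod_snd (g : ℕ → ℝ) :
    ∏ p : TriIdx n, g p.1.2.1 = ∏ j ∈ Finset.range (n + 1), g j ^ (n + 1 - j) := by
  rw [← Finset.prod_subtype (Finset.univ.filter fun q : Fin (n+1) × Fin (n+1) => q.1.1 + q.2.1 ≤ n)
      (fun q => by simp) (fun q : Fin (n+1) × Fin (n+1) => g q.2.1)]
  rw [Finset.prod_filter, Fintype.prod_prod_type_right]
  rw [← Fin.prod_univ_eq_prod_range (fun j => g j ^ (n + 1 - j))]
  refine Finset.prod_congr rfl fun j _ => ?_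
  have hcard : (Finset.univ.filter fun i : Fin (n+1) => i.1 + j.1 ≤ n)
      = Finset.Iic (⟨n - j.1, by omega⟩ : Fin (n+1)) := by
    ext i
    simp only [Finset.mem_filter, Finset.mem_univ, true_and, Finset.mem_Iic, Fin.le_def]
    have := j.2
    constructor <;> intro h <;> omega
  calc ∏ i : Fin (n+1), (if i.1 + j.1 ≤ n then g j.1 else 1)
      = ∏ i ∈ Finset.univ.filter fun i : Fin (n+1) => i.1 + j.1 ≤ n, g j.1 := by
        rw [Finset.prod_filter]
    _ = g j.1 ^ (n + 1 - j.1) := by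
        rw [Finset.prod_const, hcard, Fin.card_Iic]
        congr 1
        simp only [Fin.val_mk]
        have := j.2
        omega

lemma psi_eq (x : ℕ → ℝ) :
    psi n x = ∏ i ∈ Finset.range (n + 1), ((Np x i).eval (x i)) ^ (n + 1 - i) := by
  have hsplit : Finset.range (n + 1) = insert 0 (Finset.Icc 1 n) := by
    ext m; simp [Finset.mem_range, Finset.mem_Icc]; omega
  rw [hsplit, Finset.prod_insert (by simp)]
  have h0 : ((Np x 0).eval (x 0)) ^ (n + 1 - 0) = 1 := by simp [Np]
  rw [h0, one_mul, psi]
  refine Finset.prod_congr rfl fun i _ => ?_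
  rw [Np_eval, ← Finset.prod_pow]

lemma det_N (x y : ℕ → ℝ) :
    (Nmat n x y).det = psi n x * psi n y := by
  letI : LinearOrder (TriIdx n) := LinearOrder.lift' (key n) key_inj
  have hdet : (Nmat n x y).det = ∏ p : TriIdx n, Nmat n x y p p := by
    apply Matrix.det_of_lowerTriangular
    intro p q (h : key n p < key n q)
    by_contra hne
    simp only [Nmat] at hne
    have h1 : q.1.1.1 ≤ p.1.1.1 := by
      by_contra hgt
      push_neg at hgt
      rw [Np_eval_self_zero x hgt] at hne; simp at hne
    have h2 : q.1.2.1 ≤ p.1.2.1 := by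
      by_contra hgt
      push_neg at hgt
      rw [Np_eval_self_zero y hgt] at hne; simp at hne
    exact absurd (key_le_of_dom h1 h2) (not_le.2 h)
  rw [hdet]
  have : ∏ p : TriIdx n, Nmat n x y p p
      = (∏ p : TriIdx n, (Np x p.1.1.1).eval (x p.1.1.1))
        * ∏ p : TriIdx n, (Np y p.1.2.1).eval (y p.1.2.1) := by
    rw [← Finset.prod_mul_distrib]; rfl
  rw [this, prod_fst (fun i => (Np x i).eval (x i)), prod_snd (fun j => (Np y j).eval (y j)),
    psi_eq x, psi_eq y]

end TriAux

theorem sampleMatrix2_det_eq (n : ℕ) :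
    ∃ C : ℝ, C ≠ 0 ∧ ∀ x y : ℕ → ℝ,
      (sampleMatrix2 n x y).det = C * psi n x * psi n y := by
  refine ⟨1, one_ne_zero, fun x y => ?_⟩
  have h := congrArg Matrix.det (TriAux.mul_S (n := n) x y)
  rw [Matrix.det_mul, TriAux.det_S, mul_one, TriAux.det_N] at h
  rw [h, one_mul]
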